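/- Let |ψ⟩ be a normalized pure state on η registers of n qubits each that is antisymmetric under swapping any two registers, and let P_1,…,P_k be projectors onto orthonormal n-qubit states. Then 0 ≤ ⟨ψ|(P_1 ⊗ ⋯ ⊗ P_k ⊗ I^{⊗(η−k)})|ψ⟩ ≤ (η−k)!/η!. -/

import Mathlib

open scoped Classical

/-- Expectation value ⟨ψ| A |ψ⟩ of an operator `A` in the state `ψ`. -/
noncomputable def expval {I : Type*} [Fintype I] (A : Matrix I I ℂ) (ψ : I → ℂ) : ℂ :=
  dotProduct (star ψ) (A.mulVec ψ)

/-- The operator acting with the rank-one projector onto `φ i` on register `i` for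
`i = 1, …, k` (the first `k` registers) and with the identity on the remaining registers. -/
noncomputable def projProd (n η k : ℕ) (hk : k ≤ η) (φ : Fin k → Fin (2 ^ n) → ℂ) :
    Matrix (Fin η → Fin (2 ^ n)) (Fin η → Fin (2 ^ n)) ℂ :=
  Matrix.of fun x y =>
    (if ∀ j : Fin η, (∀ i : Fin k, Fin.castLE hk i ≠ j) → x j = y j then (1 : ℂ) else 0) *
      ∏ i : Fin k, φ i (x (Fin.castLE hk i)) * star (φ i (y (Fin.castLE hk i)))

theorem basisExt (N k : ℕ) (hkN : k ≤ N) (φ : Fin k → Fin N → ℂ)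
    (horth : ∀ i j : Fin k,
      dotProduct (star (φ i)) (φ j) = if i = j then 1 else 0) :
    ∃ B : Fin N → Fin N → ℂ,
      (∀ u v : Fin N, ∑ t, B t u * star (B t v) = if u = v then 1 else 0) ∧
      (∀ i : Fin k, B (Fin.castLE hkN i) = φ i) := by
  classical
  let v : Fin N → EuclideanSpace ℂ (Fin N) := fun t => if h : (t : ℕ) < k then WithLp.toLp 2 (φ ⟨(t : ℕ), h⟩) else 0
  let s : Set (Fin N) := {t | (t : ℕ) < k}
  have hON : Orthonormal ℂ (s.restrict v) := by
    rw [orthonormal_iff_ite]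
    rintro ⟨i, hi⟩ ⟨j, hj⟩
    have hi' : (i : ℕ) < k := hi
    have hj' : (j : ℕ) < k := hj
    have h2 : (inner ℂ (s.restrict v ⟨i, hi⟩) (s.restrict v ⟨j, hj⟩) : ℂ)
        = ∑ u, star (φ ⟨(i : ℕ), hi'⟩ u) * φ ⟨(j : ℕ), hj'⟩ u := by
      rw [PiLp.inner_apply]
      simp only [Set.restrict, v, dif_pos hi', dif_pos hj']
      exact Finset.sum_congr rfl fun u _ => by
        simp only [Set.domRestrict, Set.restrict, v, dif_pos hi', dif_pos hj', WithLp.ofLp_toLp]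
        exact mul_comm _ _
    rw [h2]
    have h3 := horth ⟨(i : ℕ), hi'⟩ ⟨(j : ℕ), hj'⟩
    rw [dotProduct] at h3
    simp only [Pi.star_apply] at h3
    rw [h3]
    congr 1
    simp [Fin.ext_iff, Subtype.ext_iff]
  obtain ⟨b, hb⟩ := Orthonormal.exists_orthonormalBasis_extension_of_card_eq
    (𝕜 := ℂ) (by simp [finrank_euclideanSpace]) hON
  refine ⟨fun t u => b t u, ?_, ?_⟩
  · -- completeness
    have h1 : ∀ p q : Fin N, ∑ u, star (b p u) * b q u = if p = q then 1 else 0 := by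
      intro p q
      have := (orthonormal_iff_ite.mp b.orthonormal) p q
      rw [PiLp.inner_apply] at this
      exact (Finset.sum_congr rfl fun u _ => mul_comm _ _).trans this
    set M : Matrix (Fin N) (Fin N) ℂ := Matrix.of fun p u => b p u with hM
    have hMM : M * M.conjTranspose = 1 := by
      ext p q
      simp only [Matrix.mul_apply, Matrix.conjTranspose_apply, Matrix.of_apply, hM,
        Matrix.one_apply]
      have h2 := congrArg star (h1 p q)
      rw [star_sum] at h2
      simp only [star_mul', star_star] at h2
      simpa [apply_ite star] using h2
    have hMM2 : M.conjTranspose * M = 1 := mul_eq_one_comm.mp hMM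
    have h4 : ∀ u w : Fin N, ∑ p, star (b p u) * b p w = if u = w then 1 else 0 := by
      intro u w
      have h5 := congrFun (congrFun hMM2 u) w
      simpa [Matrix.mul_apply, Matrix.conjTranspose_apply, hM, Matrix.one_apply] using h5
    intro u w
    have h5 := congrArg star (h4 u w)
    rw [star_sum] at h5
    simp only [star_mul', star_star] at h5
    simpa [apply_ite star] using h5
  · intro i
    have hmem : (Fin.castLE hkN i) ∈ s := by
      simp only [s, Set.mem_setOf_eq, Fin.coe_castLE]
      exact i.isLt
    have hbi := hb (Fin.castLE hkN i) hmem
    funext u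
    show b (Fin.castLE hkN i) u = φ i u
    rw [hbi]
    simp only [v, Fin.coe_castLE, dif_pos i.isLt, Fin.eta, WithLp.ofLp_toLp]

theorem aux (N η k : ℕ) (hk : k ≤ η) (hkN : k ≤ N)
    (ψ : (Fin η → Fin N) → ℂ)
    (hnorm : dotProduct (star ψ) ψ = 1)
    (hanti : ∀ i j : Fin η, i ≠ j → ∀ x : Fin η → Fin N,
      ψ (x ∘ Equiv.swap i j) = -ψ x)
    (B : Fin N → Fin N → ℂ)
    (hBcomp : ∀ u v : Fin N, ∑ t, B t u * star (B t v) = if u = v then 1 else 0)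
    (φ : Fin k → Fin N → ℂ)
    (hBφ : ∀ i : Fin k, B (Fin.castLE hkN i) = φ i) :
    ∃ r : ℝ, dotProduct (star ψ)
        ((Matrix.of fun x y : Fin η → Fin N =>
          (if ∀ j : Fin η, (∀ i : Fin k, Fin.castLE hk i ≠ j) → x j = y j then (1 : ℂ) else 0) *
            ∏ i : Fin k, φ i (x (Fin.castLE hk i)) * star (φ i (y (Fin.castLE hk i)))).mulVec ψ)
        = (r : ℂ) ∧ 0 ≤ r ∧ r ≤ (Nat.factorial (η - k) : ℝ) / (Nat.factorial η : ℝ) := by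
  classical
  set a : (Fin η → Fin N) → ℂ := fun m => ∑ x, (∏ j, star (B (m j) (x j))) * ψ x with ha
  -- KEY EXPANSION
  have key : ∀ C : Fin η → Finset (Fin N),
      ∑ m ∈ Fintype.piFinset C, star (a m) * a m
      = ∑ x, ∑ y, (star (ψ x) * ψ y) * ∏ j, (∑ t ∈ C j, B t (x j) * star (B t (y j))) := by
    intro C
    have expand : ∀ m : Fin η → Fin N,
        star (a m) * a m
        = ∑ x, ∑ y, (star (ψ x) * ψ y) * ∏ j, (B (m j) (x j) * star (B (m j) (y j))) := by
      intro m
      have hs : star (a m) = ∑ x, (∏ j, B (m j) (x j)) * star (ψ x) := by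
        rw [ha]
        rw [star_sum]
        refine Finset.sum_congr rfl fun x _ => ?_
        rw [star_mul', star_prod]
        simp [star_star]
      rw [hs, ha, Finset.sum_mul_sum]
      refine Finset.sum_congr rfl fun x _ => Finset.sum_congr rfl fun y _ => ?_
      rw [Finset.prod_mul_distrib]
      ring
    rw [Finset.sum_congr rfl fun m _ => expand m]
    rw [Finset.sum_comm]
    refine Finset.sum_congr rfl fun x _ => ?_
    rw [Finset.sum_comm]
    refine Finset.sum_congr rfl fun y _ => ?_
    rw [← Finset.mul_sum]
    exact congrArg _ (Finset.prod_univ_sum _ fun j t => B t (x j) * star (B t (y j))).symm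
  -- PARSEVAL
  have par : ∑ m : Fin η → Fin N, star (a m) * a m = 1 := by
    have h0 := key (fun _ => Finset.univ)
    rw [Fintype.piFinset_univ] at h0
    rw [h0]
    have h1 : ∀ x y : Fin η → Fin N,
        (∏ j, ∑ t, B t (x j) * star (B t (y j))) = if x = y then (1 : ℂ) else 0 := by
      intro x y
      rw [Finset.prod_congr rfl fun j _ => hBcomp (x j) (y j), Finset.prod_boole]
      simp [funext_iff]
    rw [Finset.sum_congr rfl fun x _ => Finset.sum_congr rfl fun y _ => by rw [h1 x y]]
    have h2 : ∀ x : Fin η → Fin N,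
        (∑ y, (star (ψ x) * ψ y) * if x = y then (1:ℂ) else 0) = star (ψ x) * ψ x := by
      intro x
      rw [Finset.sum_congr rfl fun y _ => by rw [mul_ite, mul_one, mul_zero]]
      simp
    rw [Finset.sum_congr rfl fun x _ => h2 x]
    simpa [dotProduct] using hnorm
  -- PINNED FINSET
  set C₀ : Fin η → Finset (Fin N) :=
    fun j => if h : (j : ℕ) < k then {Fin.castLE hkN ⟨(j : ℕ), h⟩} else Finset.univ with hC₀
  have hpin : ∀ m ∈ Fintype.piFinset C₀, ∀ i : Fin k,
      m (Fin.castLE hk i) = Fin.castLE hkN i := by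
    intro m hm i
    have h1 := Fintype.mem_piFinset.mp hm (Fin.castLE hk i)
    rw [hC₀] at h1
    simp only [Fin.coe_castLE] at h1
    rw [dif_pos i.isLt] at h1
    rw [Finset.mem_singleton] at h1
    rw [h1]
  -- PROJECTOR IDENTITY
  have proj : dotProduct (star ψ)
        ((Matrix.of fun x y : Fin η → Fin N =>
          (if ∀ j : Fin η, (∀ i : Fin k, Fin.castLE hk i ≠ j) → x j = y j then (1 : ℂ) else 0) *
            ∏ i : Fin k, φ i (x (Fin.castLE hk i)) * star (φ i (y (Fin.castLE hk i)))).mulVec ψ)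
      = ∑ m ∈ Fintype.piFinset C₀, star (a m) * a m := by
    rw [key C₀]
    rw [dotProduct]
    refine Finset.sum_congr rfl fun x _ => ?_
    rw [Matrix.mulVec, dotProduct, Finset.mul_sum]
    refine Finset.sum_congr rfl fun y _ => ?_
    simp only [Matrix.of_apply, Pi.star_apply]
    have hsplit : (∏ j, ∑ t ∈ C₀ j, B t (x j) * star (B t (y j)))
        = (∏ i : Fin k, φ i (x (Fin.castLE hk i)) * star (φ i (y (Fin.castLE hk i)))) *
          (if ∀ j : Fin η, (∀ i : Fin k, Fin.castLE hk i ≠ j) → x j = y j then (1 : ℂ) else 0) := by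
      rw [← Finset.prod_filter_mul_prod_filter_not Finset.univ (fun j : Fin η => (j : ℕ) < k)]
      congr 1
      · -- pinned part
        refine Finset.prod_bij
          (fun j hj => (⟨(j : ℕ), (Finset.mem_filter.mp hj).2⟩ : Fin k)) ?_ ?_ ?_ ?_
        · intro j hj; exact Finset.mem_univ _
        · intro j hj j' hj' hee
          exact Fin.ext (by simpa [Fin.ext_iff] using hee)
        · intro i _
          exact ⟨Fin.castLE hk i, Finset.mem_filter.mpr ⟨Finset.mem_univ _, by simp⟩,
            Fin.ext (by simp)⟩
        · intro j hj
          have hjk := (Finset.mem_filter.mp hj).2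
          have hcj : Fin.castLE hk ⟨(j : ℕ), hjk⟩ = j := Fin.ext (by simp)
          rw [hC₀]
          simp only [dif_pos hjk, Finset.sum_singleton]
          rw [hBφ ⟨(j : ℕ), hjk⟩, hcj]
      · -- identity part
        have h2 : ∀ j ∈ Finset.filter (fun j : Fin η => ¬ (j : ℕ) < k) Finset.univ,
            (∑ t ∈ C₀ j, B t (x j) * star (B t (y j))) = if x j = y j then (1:ℂ) else 0 := by
          intro j hj
          have hj' : ¬ (j : ℕ) < k := (Finset.mem_filter.mp hj).2
          rw [hC₀]
          simp only [dif_neg hj']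
          exact hBcomp (x j) (y j)
        rw [Finset.prod_congr rfl h2, Finset.prod_boole]
        congr 1
        rw [eq_iff_iff]
        constructor
        · intro h j hcast
          rcases Nat.lt_or_ge (j : ℕ) k with hlt | hge
          · exact absurd (Fin.ext (by simp [Fin.coe_castLE]) :
              Fin.castLE hk ⟨(j : ℕ), hlt⟩ = j) (hcast ⟨(j : ℕ), hlt⟩)
          · exact h j (Finset.mem_filter.mpr ⟨Finset.mem_univ _, by omega⟩)
        · intro h j hj
          have hj' : ¬ (j : ℕ) < k := (Finset.mem_filter.mp hj).2
          exact h j fun i hi => hj' (hi ▸ (by simp [Fin.coe_castLE] : ((Fin.castLE hk i : Fin η) : ℕ) < k))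
    rw [hsplit]
    ring
  -- SIGN UNDER PERMUTATION
  have hperm : ∀ π : Equiv.Perm (Fin η), ∀ x : Fin η → Fin N,
      ψ (x ∘ ⇑π) = ((Equiv.Perm.sign π : ℤ) : ℂ) * ψ x := by
    intro π
    refine Equiv.Perm.swap_induction_on π ?_ ?_
    · intro x; simp
    · intro f i j hij ih x
      have hco : x ∘ ⇑(Equiv.swap i j * f) = (x ∘ ⇑(Equiv.swap i j)) ∘ ⇑f := rfl
      rw [hco, ih, hanti i j hij x, map_mul, Equiv.Perm.sign_swap hij]
      push_cast [Units.val_mul]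
      ring
  -- a UNDER PERMUTATION
  have haperm : ∀ (m : Fin η → Fin N) (π : Equiv.Perm (Fin η)),
      a (m ∘ ⇑π) = ((Equiv.Perm.sign π : ℤ) : ℂ) * a m := by
    intro m π
    have hbij : Function.Bijective (fun z : Fin η → Fin N => z ∘ ⇑π) := by
      constructor
      · intro z w h
        funext t
        have := congrFun h (π.symm t)
        simpa using this
      · intro w
        exact ⟨w ∘ ⇑π.symm, by funext t; simp⟩
    have hstep := Fintype.sum_bijective (fun z : Fin η → Fin N => z ∘ ⇑π) hbij
      (fun z => (∏ j, star (B ((m ∘ ⇑π) j) ((z ∘ ⇑π) j))) * ψ (z ∘ ⇑π))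
      (fun x => (∏ j, star (B ((m ∘ ⇑π) j) (x j))) * ψ x)
      (fun z => rfl)
    calc a (m ∘ ⇑π)
        = ∑ z : Fin η → Fin N, (∏ j, star (B (m (π j)) (z (π j)))) * ψ (z ∘ ⇑π) := by
          rw [ha]; exact hstep.symm
      _ = ∑ z : Fin η → Fin N,
            ((Equiv.Perm.sign π : ℤ) : ℂ) * ((∏ j, star (B (m j) (z j))) * ψ z) := by
          refine Finset.sum_congr rfl fun z _ => ?_
          rw [Equiv.prod_comp π (fun j => star (B (m j) (z j))), hperm π z]
          ring
      _ = ((Equiv.Perm.sign π : ℤ) : ℂ) * a m := by rw [← Finset.mul_sum, ha]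
  -- a VANISHES ON NON-INJECTIVE LABELS
  have hzero : ∀ m : Fin η → Fin N, ¬ Function.Injective m → a m = 0 := by
    intro m hm
    rw [Function.not_injective_iff] at hm
    obtain ⟨i, j, hmij, hij⟩ := hm
    have hcomp : m ∘ ⇑(Equiv.swap i j) = m := by
      funext t
      simp only [Function.comp_apply, Equiv.swap_apply_def]
      split_ifs with h1 h2
      · rw [h1]; exact hmij.symm
      · rw [h2]; exact hmij
      · rfl
    have h6 := haperm m (Equiv.swap i j)
    rw [hcomp, Equiv.Perm.sign_swap hij] at h6
    have h7 : a m = -a m := by simpa using h6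
    linear_combination h7 / 2
  -- normSq INVARIANCE
  have hNperm : ∀ (m : Fin η → Fin N) (π : Equiv.Perm (Fin η)),
      Complex.normSq (a (m ∘ ⇑π)) = Complex.normSq (a m) := by
    intro m π
    rw [haperm, Complex.normSq_mul]
    rcases Int.units_eq_one_or (Equiv.Perm.sign π) with h | h <;> rw [h] <;> simp
  -- REAL PARSEVAL
  have hpar' : ∑ m : Fin η → Fin N, Complex.normSq (a m) = 1 := by
    have h1 : ((∑ m : Fin η → Fin N, Complex.normSq (a m) : ℝ) : ℂ) = 1 := by
      push_cast
      rw [← par]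
      refine Finset.sum_congr rfl fun m _ => ?_
      rw [Complex.normSq_eq_conj_mul_self, RCLike.star_def]
    exact_mod_cast h1
  -- THE COUNTING BOUND
  set Sinj := (Fintype.piFinset C₀).filter (fun m => Function.Injective m) with hSinj
  have hcnt : ∀ m' : Fin η → Fin N,
      (Sinj.filter fun m =>
        m' ∈ Finset.image (fun π : Equiv.Perm (Fin η) => m ∘ ⇑π) Finset.univ).card
      ≤ (η - k).factorial := by
    intro m'
    set T := Sinj.filter fun m =>
      m' ∈ Finset.image (fun π : Equiv.Perm (Fin η) => m ∘ ⇑π) Finset.univ with hT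
    rcases Finset.eq_empty_or_nonempty T with he | hne
    · rw [he]; simp
    obtain ⟨m₀, hm₀⟩ := hne
    have hm₀' := Finset.mem_filter.mp hm₀
    have hm₀S := Finset.mem_filter.mp hm₀'.1
    obtain ⟨π₀, -, hπ₀⟩ := Finset.mem_image.mp hm₀'.2
    have hm'inj : Function.Injective m' := by
      rw [← hπ₀]; exact hm₀S.2.comp π₀.injective
    set D : Finset (Fin N) :=
      (Finset.univ.image m') \ (Finset.univ.image fun i : Fin k => Fin.castLE hkN i) with hD
    have hsub : (Finset.univ.image fun i : Fin k => Fin.castLE hkN i)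
        ⊆ Finset.univ.image m' := by
      intro t ht
      obtain ⟨i, -, hi⟩ := Finset.mem_image.mp ht
      have h8 : t = m₀ (Fin.castLE hk i) := by rw [← hi, hpin m₀ hm₀S.1 i]
      have h9 : m₀ (Fin.castLE hk i) = m' (π₀.symm (Fin.castLE hk i)) := by
        rw [← hπ₀]; simp
      exact Finset.mem_image.mpr ⟨π₀.symm (Fin.castLE hk i), Finset.mem_univ _,
        by rw [← h9, ← h8]⟩
    have hDcard : D.card = η - k := by
      rw [hD, Finset.card_sdiff_of_subset hsub, Finset.card_image_of_injective _ hm'inj,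
        Finset.card_image_of_injective _ (Fin.castLE_injective hkN), Finset.card_univ,
        Finset.card_univ, Fintype.card_fin, Fintype.card_fin]
    have hDcard' : Fintype.card {t // t ∈ D} = η - k := by rw [Fintype.card_coe, hDcard]
    let eα : {j : Fin η // k ≤ (j : ℕ)} ≃ Fin (η - k) :=
      { toFun := fun j => ⟨j.1.1 - k, by have h1 := j.1.2; have h2 := j.2; omega⟩
        invFun := fun i => ⟨⟨i.1 + k, by have := i.2; omega⟩, Nat.le_add_left k i.1⟩
        left_inv := fun j => by
          apply Subtype.ext; apply Fin.ext; have := j.2; simp; omega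
        right_inv := fun i => by apply Fin.ext; simp }
    have hαcard : Fintype.card {j : Fin η // k ≤ (j : ℕ)} = η - k := by
      rw [Fintype.card_congr eα, Fintype.card_fin]
    haveI hne2 : Nonempty ({j : Fin η // k ≤ (j : ℕ)} ↪ {t // t ∈ D}) :=
      ⟨((Fintype.equivFinOfCardEq hαcard).toEmbedding).trans
        (Fintype.equivFinOfCardEq hDcard').symm.toEmbedding⟩
    set Q : (Fin η → Fin N) → Prop := fun m =>
      Function.Injective m ∧ ∀ j : {j : Fin η // k ≤ (j : ℕ)}, m j.1 ∈ D with hQdef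
    have hQ : ∀ m ∈ T, Q m := by
      intro m hm
      have h1 := Finset.mem_filter.mp hm
      have h2 := Finset.mem_filter.mp h1.1
      obtain ⟨π, -, hπ⟩ := Finset.mem_image.mp h1.2
      refine ⟨h2.2, fun j => ?_⟩
      rw [hD, Finset.mem_sdiff]
      constructor
      · refine Finset.mem_image.mpr ⟨π.symm j.1, Finset.mem_univ _, ?_⟩
        rw [← hπ]; simp
      · intro hmem
        obtain ⟨i, -, hi⟩ := Finset.mem_image.mp hmem
        have h3 : m j.1 = m (Fin.castLE hk i) := by rw [hpin m h2.1 i, ← hi]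
        have h4 := h2.2 h3
        have h5 : (j.1 : ℕ) = (i : ℕ) := by rw [h4]; simp
        have h6 := j.2
        have h7 := i.isLt
        omega
    set Ψ : (Fin η → Fin N) → ({j : Fin η // k ≤ (j : ℕ)} ↪ {t // t ∈ D}) := fun m =>
      if h : Q m then
        ⟨fun j => ⟨m j.1, h.2 j⟩, fun j₁ j₂ hh => Subtype.ext (h.1 (congrArg Subtype.val hh))⟩
      else Classical.arbitrary _ with hΨ
    have hinj : Set.InjOn Ψ ↑T := by
      intro m hm mm hmm heq
      have Qm := hQ m (Finset.mem_coe.mp hm)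
      have Qmm := hQ mm (Finset.mem_coe.mp hmm)
      have hmS : m ∈ Fintype.piFinset C₀ :=
        (Finset.mem_filter.mp (Finset.mem_filter.mp (Finset.mem_coe.mp hm)).1).1
      have hmmS : mm ∈ Fintype.piFinset C₀ :=
        (Finset.mem_filter.mp (Finset.mem_filter.mp (Finset.mem_coe.mp hmm)).1).1
      simp only [hΨ] at heq
      rw [dif_pos Qm, dif_pos Qmm] at heq
      funext j
      rcases Nat.lt_or_ge (j : ℕ) k with hlt | hge
      · have hcast : Fin.castLE hk ⟨(j : ℕ), hlt⟩ = j := Fin.ext (by simp)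
        rw [← hcast, hpin m hmS ⟨(j : ℕ), hlt⟩, hpin mm hmmS ⟨(j : ℕ), hlt⟩]
      · have h9 := congrFun (congrArg
          (fun (E : {j : Fin η // k ≤ (j : ℕ)} ↪ {t // t ∈ D}) =>
            (E : {j : Fin η // k ≤ (j : ℕ)} → {t // t ∈ D})) heq) ⟨j, hge⟩
        exact congrArg Subtype.val h9
    calc T.card
        ≤ (Finset.univ : Finset ({j : Fin η // k ≤ (j : ℕ)} ↪ {t // t ∈ D})).card :=
          Finset.card_le_card_of_injOn Ψ (fun _ _ => Finset.mem_univ _) hinj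
      _ = (η - k).factorial := by
          rw [Finset.card_univ, Fintype.card_embedding_eq, hαcard, hDcard',
            Nat.descFactorial_self]
  -- DROP NON-INJECTIVE TERMS
  have hA : ∑ m ∈ Fintype.piFinset C₀, Complex.normSq (a m)
      = ∑ m ∈ Sinj, Complex.normSq (a m) := by
    refine (Finset.sum_filter_of_ne ?_).symm
    intro m hm hne
    by_contra h
    exact hne (by rw [hzero m h]; simp)
  -- MAIN INEQUALITY
  have hmain : (η.factorial : ℝ) * ∑ m ∈ Fintype.piFinset C₀, Complex.normSq (a m)
      ≤ ((η - k).factorial : ℝ) := by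
    calc (η.factorial : ℝ) * ∑ m ∈ Fintype.piFinset C₀, Complex.normSq (a m)
        = ∑ m ∈ Sinj, (η.factorial : ℝ) * Complex.normSq (a m) := by
          rw [hA, Finset.mul_sum]
      _ = ∑ m ∈ Sinj, ∑ π : Equiv.Perm (Fin η), Complex.normSq (a (m ∘ ⇑π)) := by
          refine Finset.sum_congr rfl fun m _ => ?_
          rw [Finset.sum_congr rfl fun π _ => hNperm m π, Finset.sum_const, Finset.card_univ,
            Fintype.card_perm, Fintype.card_fin, nsmul_eq_mul]
      _ = ∑ m ∈ Sinj, ∑ m' ∈ Finset.image (fun π : Equiv.Perm (Fin η) => m ∘ ⇑π) Finset.univ,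
            Complex.normSq (a m') := by
          refine Finset.sum_congr rfl fun m hm => ?_
          have hmi : Function.Injective m := (Finset.mem_filter.mp hm).2
          have hinj2 : ∀ π ∈ (Finset.univ : Finset (Equiv.Perm (Fin η))), ∀ π' ∈ (Finset.univ : Finset (Equiv.Perm (Fin η))),
              m ∘ ⇑π = m ∘ ⇑π' → π = π' :=
            fun π _ π' _ h => Equiv.ext fun t => hmi (congrFun h t)
          rw [Finset.sum_image hinj2]
      _ = ∑ m ∈ Sinj, ∑ m' : Fin η → Fin N,
            if m' ∈ Finset.image (fun π : Equiv.Perm (Fin η) => m ∘ ⇑π) Finset.univ then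
              Complex.normSq (a m') else 0 := by
          refine Finset.sum_congr rfl fun m _ => ?_
          rw [Finset.sum_ite_mem, Finset.univ_inter]
      _ = ∑ m' : Fin η → Fin N, ∑ m ∈ Sinj,
            if m' ∈ Finset.image (fun π : Equiv.Perm (Fin η) => m ∘ ⇑π) Finset.univ then
              Complex.normSq (a m') else 0 := Finset.sum_comm
      _ = ∑ m' : Fin η → Fin N,
            ((Sinj.filter fun m =>
              m' ∈ Finset.image (fun π : Equiv.Perm (Fin η) => m ∘ ⇑π) Finset.univ).card : ℝ)
              * Complex.normSq (a m') := by
          refine Finset.sum_congr rfl fun m' _ => ?_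
          rw [← Finset.sum_filter, Finset.sum_const, nsmul_eq_mul]
      _ ≤ ∑ m' : Fin η → Fin N, ((η - k).factorial : ℝ) * Complex.normSq (a m') := by
          refine Finset.sum_le_sum fun m' _ => ?_
          exact mul_le_mul_of_nonneg_right
            (by exact_mod_cast hcnt m') (Complex.normSq_nonneg _)
      _ = ((η - k).factorial : ℝ) := by rw [← Finset.mul_sum, hpar', mul_one]
  -- ASSEMBLE
  refine ⟨∑ m ∈ Fintype.piFinset C₀, Complex.normSq (a m), ?_, ?_, ?_⟩
  · rw [proj]
    push_cast
    refine Finset.sum_congr rfl fun m _ => ?_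
    rw [Complex.normSq_eq_conj_mul_self, RCLike.star_def]
  · exact Finset.sum_nonneg fun m _ => Complex.normSq_nonneg _
  · rw [le_div_iff₀ (by positivity : (0:ℝ) < (η.factorial : ℝ))]
    calc (∑ m ∈ Fintype.piFinset C₀, Complex.normSq (a m)) * (η.factorial : ℝ)
        = (η.factorial : ℝ) * ∑ m ∈ Fintype.piFinset C₀, Complex.normSq (a m) := by ring
      _ ≤ ((η - k).factorial : ℝ) := hmain

/-- For a normalized antisymmetric state ψ on η registers of n qubits and
projectors P_1,…,P_k onto orthonormal n-qubit states,
0 ≤ ⟨ψ|(P_1 ⊗ ⋯ ⊗ P_k ⊗ I^{⊗(η−k)})|ψ⟩ ≤ (η−k)!/η!. -/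
theorem stmt_1 (n η k : ℕ) (hk : k ≤ η)
    (ψ : (Fin η → Fin (2 ^ n)) → ℂ)
    (hnorm : dotProduct (star ψ) ψ = 1)
    (hanti : ∀ i j : Fin η, i ≠ j → ∀ x : Fin η → Fin (2 ^ n),
      ψ (x ∘ Equiv.swap i j) = -ψ x)
    (φ : Fin k → Fin (2 ^ n) → ℂ)
    (horth : ∀ i j : Fin k,
      dotProduct (star (φ i)) (φ j) = if i = j then 1 else 0) :
    ∃ r : ℝ, expval (projProd n η k hk φ) ψ = (r : ℂ) ∧
      0 ≤ r ∧ r ≤ (Nat.factorial (η - k) : ℝ) / (Nat.factorial η : ℝ) := by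
  classical
  have hkN : k ≤ 2 ^ n := by
    let φ' : Fin k → EuclideanSpace ℂ (Fin (2 ^ n)) := fun i => WithLp.toLp 2 (φ i)
    have hON : Orthonormal ℂ φ' := by
      rw [orthonormal_iff_ite]
      intro i j
      rw [PiLp.inner_apply]
      have h1 := horth i j
      rw [dotProduct] at h1
      simp only [Pi.star_apply] at h1
      rw [← h1]
      exact Finset.sum_congr rfl fun u _ => mul_comm _ _
    have h2 := hON.linearIndependent.fintype_card_le_finrank
    simpa [finrank_euclideanSpace] using h2
  obtain ⟨B, hBcomp, hBφ⟩ := basisExt (2 ^ n) k hkN φ horth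
  obtain ⟨r, hr1, hr2, hr3⟩ := aux (2 ^ n) η k hk hkN ψ hnorm hanti B hBcomp φ hBφ
  exact ⟨r, hr1, hr2, hr3⟩
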